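/- Let 𝒜 be an arbitrary linear operator from Hermitian n×n matrices to ℝ^m, let X̂ = x̂x̂* be rank-one PSD, e ∈ ℝ^m, and b = 𝒜(X̂) + e with ‖b‖₂ > ‖e‖₂. Define φ(X) = (1/2)‖𝒜(X) − b‖₂² + λ(Tr(X) − ‖X‖_F). If λ > ‖𝒜‖‖e‖₂/(√2 − 1) and X^opt is a global minimizer of φ over PSD matrices satisfying the KKT first-order optimality conditions, then rank(X^opt) = 1. -/

import Mathlib

open Matrix
open scoped ComplexOrder

noncomputable def frob {n : ℕ} (X : Matrix (Fin n) (Fin n) ℂ) : ℝ :=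
  Real.sqrt ((Xᴴ * X).trace.re)

noncomputable def enormR {m : ℕ} (v : Fin m → ℝ) : ℝ :=
  Real.sqrt (∑ i, (v i) ^ 2)

/-- Operator norm of a linear map `𝒜` restricted to Hermitian matrices,
with Frobenius norm on the source and Euclidean norm on the target. -/
noncomputable def opNormL {n m : ℕ}
    (𝒜 : Matrix (Fin n) (Fin n) ℂ →ₗ[ℝ] (Fin m → ℝ)) : ℝ :=
  sSup {t : ℝ | ∃ X : Matrix (Fin n) (Fin n) ℂ, X.IsHermitian ∧ X ≠ 0 ∧
    t = enormR (𝒜 X) / frob X}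

noncomputable def phi {n m : ℕ} (𝒜 : Matrix (Fin n) (Fin n) ℂ →ₗ[ℝ] (Fin m → ℝ))
    (b : Fin m → ℝ) (lam : ℝ) (X : Matrix (Fin n) (Fin n) ℂ) : ℝ :=
  (1 / 2) * (enormR (𝒜 X - b)) ^ 2 + lam * (X.trace.re - frob X)




lemma enorm_nonneg' {m : ℕ} (v : Fin m → ℝ) : 0 ≤ enormR v := Real.sqrt_nonneg _

lemma enorm_sq' {m : ℕ} (v : Fin m → ℝ) : enormR v ^ 2 = ∑ i, (v i) ^ 2 :=
  Real.sq_sqrt (Finset.sum_nonneg fun i _ => sq_nonneg _)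

lemma enorm_neg' {m : ℕ} (v : Fin m → ℝ) : enormR (-v) = enormR v := by
  unfold enormR; congr 1; exact Finset.sum_congr rfl fun i _ => by simp

lemma enorm_mono {m : ℕ} {v w : Fin m → ℝ} (h : ∑ i, (v i)^2 ≤ ∑ i, (w i)^2) :
    enormR v ≤ enormR w := Real.sqrt_le_sqrt h

lemma trace_conj_re {n : ℕ} (N : Matrix (Fin n) (Fin n) ℂ) :
    (Nᴴ * N).trace.re = ∑ i, ∑ j, ‖N j i‖ ^ 2 := by
  simp only [Matrix.trace, Matrix.diag, Matrix.mul_apply, Matrix.conjTranspose_apply,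
    Complex.re_sum]
  refine Finset.sum_congr rfl fun i _ => Finset.sum_congr rfl fun j _ => ?_
  simp [Complex.star_def, ← Complex.normSq_eq_conj_mul_self, Complex.normSq_eq_norm_sq,
    ← Complex.ofReal_pow]

lemma frob_nonneg' {n : ℕ} (X : Matrix (Fin n) (Fin n) ℂ) : 0 ≤ frob X := Real.sqrt_nonneg _

lemma frob_sq {n : ℕ} (X : Matrix (Fin n) (Fin n) ℂ) :
    frob X ^ 2 = ∑ i, ∑ j, ‖X j i‖ ^ 2 := by
  rw [frob, Real.sq_sqrt, trace_conj_re]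
  rw [trace_conj_re]
  positivity

lemma frob_eq_zero {n : ℕ} {X : Matrix (Fin n) (Fin n) ℂ} (h : frob X = 0) : X = 0 := by
  have h2 : frob X ^ 2 = 0 := by rw [h]; ring
  rw [frob_sq] at h2
  ext i j
  have := (Finset.sum_eq_zero_iff_of_nonneg (fun i _ => Finset.sum_nonneg
    (fun j _ => sq_nonneg _))).mp h2 j (Finset.mem_univ _)
  have := (Finset.sum_eq_zero_iff_of_nonneg (fun j _ => sq_nonneg _)).mp this i (Finset.mem_univ _)
  have : ‖X i j‖ = 0 := by nlinarith [norm_nonneg (X i j)]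
  simpa using this

lemma entry_le_frob {n : ℕ} (X : Matrix (Fin n) (Fin n) ℂ) (i j : Fin n) :
    ‖X i j‖ ≤ frob X := by
  have h1 : ‖X i j‖ ^ 2 ≤ frob X ^ 2 := by
    rw [frob_sq]
    calc ‖X i j‖ ^ 2 ≤ ∑ k, ‖X k j‖ ^ 2 := Finset.single_le_sum
          (f := fun k => ‖X k j‖ ^ 2) (fun k _ => sq_nonneg _) (Finset.mem_univ i)
      _ ≤ ∑ l, ∑ k, ‖X k l‖ ^ 2 := Finset.single_le_sum
          (f := fun l => ∑ k, ‖X k l‖ ^ 2)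
          (fun l _ => Finset.sum_nonneg fun k _ => sq_nonneg _) (Finset.mem_univ j)
  have := frob_nonneg' X
  nlinarith [norm_nonneg (X i j)]



lemma enorm_eq_norm {m : ℕ} (v : Fin m → ℝ) :
    enormR v = ‖(WithLp.linearEquiv 2 ℝ (Fin m → ℝ)).symm v‖ := by
  rw [EuclideanSpace.norm_eq]
  unfold enormR
  congr 1
  refine Finset.sum_congr rfl fun i _ => ?_
  simp [WithLp.linearEquiv, Real.norm_eq_abs, sq_abs]

lemma exists_bound {n m : ℕ} (𝒜 : Matrix (Fin n) (Fin n) ℂ →ₗ[ℝ] (Fin m → ℝ)) :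
    ∃ C : ℝ, 0 ≤ C ∧ ∀ X : Matrix (Fin n) (Fin n) ℂ, enormR (𝒜 X) ≤ C * frob X := by
  set L := (WithLp.linearEquiv 2 ℝ (Fin m → ℝ)).symm with hL
  set B := (L : (Fin m → ℝ) →ₗ[ℝ] EuclideanSpace ℝ (Fin m)) ∘ₗ 𝒜 with hB
  have henorm : ∀ X, enormR (𝒜 X) = ‖B X‖ := fun X => by
    rw [enorm_eq_norm]; rfl
  refine ⟨∑ p : Fin n × Fin n, (‖B (single p.1 p.2 (1:ℂ))‖ +
    ‖B (single p.1 p.2 Complex.I)‖), by positivity, fun X => ?_⟩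
  have hX : X = ∑ p : Fin n × Fin n, ((X p.1 p.2).re • single p.1 p.2 (1:ℂ) +
      (X p.1 p.2).im • single p.1 p.2 Complex.I) := by
    ext i j
    rw [Matrix.sum_apply]
    rw [Finset.sum_eq_single (i, j)]
    · rw [Matrix.add_apply, Matrix.smul_apply, Matrix.smul_apply,
        Matrix.single_apply_same, Matrix.single_apply_same,
        Complex.real_smul, Complex.real_smul, mul_one]
      exact (Complex.re_add_im _).symm
    · intro p _ hp
      have : ¬(p.1 = i ∧ p.2 = j) := by
        intro ⟨h1, h2⟩; exact hp (Prod.ext h1 h2)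
      simp [Matrix.single, this]
    · intro h; exact absurd (Finset.mem_univ _) h
  calc enormR (𝒜 X) = ‖B X‖ := henorm X
    _ = ‖∑ p : Fin n × Fin n, ((X p.1 p.2).re • B (single p.1 p.2 (1:ℂ)) +
        (X p.1 p.2).im • B (single p.1 p.2 Complex.I))‖ := by
        nth_rewrite 1 [hX]
        rw [map_sum]
        exact congrArg _ (Finset.sum_congr rfl fun p _ => by
          rw [map_add, LinearMap.map_smul, LinearMap.map_smul])
    _ ≤ ∑ p : Fin n × Fin n, ‖(X p.1 p.2).re • B (single p.1 p.2 (1:ℂ)) +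
        (X p.1 p.2).im • B (single p.1 p.2 Complex.I)‖ := norm_sum_le _ _
    _ ≤ ∑ p : Fin n × Fin n, frob X * (‖B (single p.1 p.2 (1:ℂ))‖ +
        ‖B (single p.1 p.2 Complex.I)‖) := by
        refine Finset.sum_le_sum fun p _ => ?_
        have h1 : |(X p.1 p.2).re| ≤ frob X :=
          (Complex.abs_re_le_norm _).trans (entry_le_frob X p.1 p.2)
        have h2 : |(X p.1 p.2).im| ≤ frob X :=
          (Complex.abs_im_le_norm _).trans (entry_le_frob X p.1 p.2)
        calc ‖_ + _‖ ≤ ‖(X p.1 p.2).re • B (single p.1 p.2 (1:ℂ))‖ +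
              ‖(X p.1 p.2).im • B (single p.1 p.2 Complex.I)‖ := norm_add_le _ _
          _ = |(X p.1 p.2).re| * ‖B (single p.1 p.2 (1:ℂ))‖ +
              |(X p.1 p.2).im| * ‖B (single p.1 p.2 Complex.I)‖ := by
              rw [norm_smul, norm_smul, Real.norm_eq_abs, Real.norm_eq_abs]
          _ ≤ frob X * ‖B (single p.1 p.2 (1:ℂ))‖ +
              frob X * ‖B (single p.1 p.2 Complex.I)‖ :=
              add_le_add (mul_le_mul_of_nonneg_right h1 (norm_nonneg _))
                (mul_le_mul_of_nonneg_right h2 (norm_nonneg _))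
          _ = frob X * (‖B (single p.1 p.2 (1:ℂ))‖ +
              ‖B (single p.1 p.2 Complex.I)‖) := by ring
    _ = _ := by rw [← Finset.mul_sum, mul_comm]

lemma opNormL_nonneg {n m : ℕ} (𝒜 : Matrix (Fin n) (Fin n) ℂ →ₗ[ℝ] (Fin m → ℝ)) :
    0 ≤ opNormL 𝒜 := by
  refine Real.sSup_nonneg fun t ht => ?_
  obtain ⟨X, _, _, rfl⟩ := ht
  have := Real.sqrt_nonneg (∑ i, (𝒜 X i)^2)
  have := frob_nonneg' X
  positivity

lemma frob_pos {n : ℕ} {X : Matrix (Fin n) (Fin n) ℂ} (h : X ≠ 0) : 0 < frob X :=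
  (frob_nonneg' X).lt_of_ne' fun h0 => h (frob_eq_zero h0)

lemma enorm_le_opNormL {n m : ℕ} (𝒜 : Matrix (Fin n) (Fin n) ℂ →ₗ[ℝ] (Fin m → ℝ))
    {X : Matrix (Fin n) (Fin n) ℂ} (hX : X.IsHermitian) :
    enormR (𝒜 X) ≤ opNormL 𝒜 * frob X := by
  by_cases hX0 : X = 0
  · subst hX0
    simp only [map_zero]
    have : enormR (0 : Fin m → ℝ) = 0 := by simp [enormR]
    have : frob (0 : Matrix (Fin n) (Fin n) ℂ) = 0 := by simp [frob]
    simp_all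
  · have hf : 0 < frob X := frob_pos hX0
    obtain ⟨C, hC0, hC⟩ := exists_bound 𝒜
    have hbdd : BddAbove {t : ℝ | ∃ Y : Matrix (Fin n) (Fin n) ℂ, Y.IsHermitian ∧ Y ≠ 0 ∧
        t = enormR (𝒜 Y) / frob Y} := by
      refine ⟨C, fun t ht => ?_⟩
      obtain ⟨Y, _, hY0, rfl⟩ := ht
      rw [div_le_iff₀ (frob_pos hY0)]
      exact hC Y
    have hmem : enormR (𝒜 X) / frob X ∈ {t : ℝ | ∃ Y : Matrix (Fin n) (Fin n) ℂ, Y.IsHermitian ∧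
        Y ≠ 0 ∧ t = enormR (𝒜 Y) / frob Y} := ⟨X, hX, hX0, rfl⟩
    have hle := le_csSup hbdd hmem
    calc enormR (𝒜 X) = (enormR (𝒜 X) / frob X) * frob X := by field_simp
      _ ≤ opNormL 𝒜 * frob X := by
          exact mul_le_mul_of_nonneg_right hle hf.le

lemma trace_unitary_conj {n : ℕ} (U : Matrix (Fin n) (Fin n) ℂ)
    (hU : U ∈ Matrix.unitaryGroup (Fin n) ℂ) (d : Fin n → ℂ) :
    (U * diagonal d * star U).trace = ∑ i, d i := by
  rw [Matrix.trace_mul_cycle, Matrix.mem_unitaryGroup_iff'.mp hU, one_mul, trace_diagonal]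

lemma trace_re_eq_sum_eigs {n : ℕ} {A : Matrix (Fin n) (Fin n) ℂ} (hA : A.IsHermitian) :
    A.trace.re = ∑ i, hA.eigenvalues i := by
  conv_lhs => rw [hA.spectral_theorem, Unitary.conjStarAlgAut_apply]
  rw [trace_unitary_conj _ (hA.eigenvectorUnitary).2]
  rw [Complex.re_sum]
  simp

lemma herm_sq_eq {n : ℕ} {A : Matrix (Fin n) (Fin n) ℂ} (hA : A.IsHermitian) :
    Aᴴ * A = (hA.eigenvectorUnitary : Matrix (Fin n) (Fin n) ℂ) *
      diagonal (fun i => ((hA.eigenvalues i : ℂ)) ^ 2) *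
      star (hA.eigenvectorUnitary : Matrix (Fin n) (Fin n) ℂ) := by
  set U := (hA.eigenvectorUnitary : Matrix (Fin n) (Fin n) ℂ)
  set D := diagonal (RCLike.ofReal ∘ hA.eigenvalues : Fin n → ℂ)
  have hu : star U * U = 1 := Matrix.mem_unitaryGroup_iff'.mp (hA.eigenvectorUnitary).2
  have h1 : Aᴴ = A := hA
  calc Aᴴ * A = (U * D * star U) * (U * D * star U) := by rw [h1, hA.spectral_theorem, Unitary.conjStarAlgAut_apply]
    _ = U * (D * ((star U * U) * (D * star U))) := by simp only [mul_assoc]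
    _ = U * (D * D) * star U := by
        rw [hu, one_mul, ← mul_assoc, ← mul_assoc, mul_assoc U D D]
    _ = _ := by
        rw [diagonal_mul_diagonal]
        congr 1
        congr 1
        funext i
        simp [sq]

lemma frob_sq_eigs {n : ℕ} {A : Matrix (Fin n) (Fin n) ℂ} (hA : A.IsHermitian) :
    ((Aᴴ * A).trace).re = ∑ i, hA.eigenvalues i ^ 2 := by
  rw [herm_sq_eq hA, trace_unitary_conj _ (hA.eigenvectorUnitary).2, Complex.re_sum]
  refine Finset.sum_congr rfl fun i _ => ?_
  norm_cast

lemma trace_sq_unitary {n : ℕ} (M U : Matrix (Fin n) (Fin n) ℂ)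
    (hU : U ∈ Matrix.unitaryGroup (Fin n) ℂ) :
    (Mᴴ * M).trace.re = ∑ i, ∑ j, ‖(M * U) j i‖ ^ 2 := by
  rw [← trace_conj_re (M * U)]
  congr 1
  rw [conjTranspose_mul]
  refine Eq.symm ?_
  calc (Uᴴ * Mᴴ * (M * U)).trace = (Uᴴ * (Mᴴ * M) * U).trace := by
        simp only [mul_assoc]
    _ = (U * Uᴴ * (Mᴴ * M)).trace := by rw [Matrix.trace_mul_cycle]
    _ = (Mᴴ * M).trace := by
        rw [← Matrix.star_eq_conjTranspose, Matrix.mem_unitaryGroup_iff.mp hU, one_mul]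

section
open scoped MatrixOrder

lemma psd_mul_eq_zero {n : ℕ} {A B : Matrix (Fin n) (Fin n) ℂ}
    (hA : A.PosSemidef) (hB : B.PosSemidef) (h : (Aᴴ * B).trace = 0) : A * B = 0 := by
  set S := CFC.sqrt A with hSdef
  set T := CFC.sqrt B with hTdef
  have hScon : Sᴴ = S := (CFC.sqrt_nonneg A).posSemidef.1
  have hTcon : Tᴴ = T := (CFC.sqrt_nonneg B).posSemidef.1
  have hSS : S * S = A := CFC.sqrt_mul_sqrt_self A hA.nonneg
  have hTT : T * T = B := CFC.sqrt_mul_sqrt_self B hB.nonneg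
  have key : ((S * T)ᴴ * (S * T)).trace = 0 := by
    rw [conjTranspose_mul, hScon, hTcon]
    calc (T * S * (S * T)).trace = (T * (A * T)).trace := by
          rw [mul_assoc, ← mul_assoc S S T, hSS]
      _ = (A * T * T).trace := by rw [Matrix.trace_mul_comm, mul_assoc]
      _ = (Aᴴ * B).trace := by rw [mul_assoc, hTT, hA.1]
      _ = 0 := h
  have hST : S * T = 0 := by
    have hre : ((S * T)ᴴ * (S * T)).trace.re = 0 := by rw [key]; rfl
    rw [trace_conj_re] at hre
    ext i j
    have h1 := (Finset.sum_eq_zero_iff_of_nonneg (fun i _ => Finset.sum_nonneg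
      (fun j _ => sq_nonneg _))).mp hre j (Finset.mem_univ _)
    have h2 := (Finset.sum_eq_zero_iff_of_nonneg (fun j _ => sq_nonneg _)).mp h1 i
      (Finset.mem_univ _)
    have : ‖(S * T) i j‖ = 0 := by nlinarith [norm_nonneg ((S * T) i j)]
    simpa using this
  calc A * B = S * (S * T) * T := by rw [← hSS, ← hTT]; simp only [mul_assoc]
    _ = 0 := by rw [hST]; simp

end


lemma real_smul_herm {n : ℕ} {A : Matrix (Fin n) (Fin n) ℂ} (r : ℝ) (hA : A.IsHermitian) :
    (r • A).IsHermitian := by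
  have h1 : (r • A)ᴴ = r • Aᴴ := by
    ext i j
    simp [Matrix.conjTranspose_apply, Complex.real_smul]
  rw [Matrix.IsHermitian, h1, hA]

set_option maxHeartbeats 1000000 in
theorem stmt_13 {n m : ℕ}
    (𝒜 : Matrix (Fin n) (Fin n) ℂ →ₗ[ℝ] (Fin m → ℝ))
    (𝒜adj : (Fin m → ℝ) →ₗ[ℝ] Matrix (Fin n) (Fin n) ℂ)
    (hadj : ∀ X : Matrix (Fin n) (Fin n) ℂ, X.IsHermitian →
      ∀ y : Fin m → ℝ, (∑ i, 𝒜 X i * y i) = ((Xᴴ * 𝒜adj y).trace).re)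
    (xhat : Fin n → ℂ) (e b : Fin m → ℝ)
    (hb : b = 𝒜 (Matrix.vecMulVec xhat (star xhat)) + e)
    (hbe : enormR e < enormR b)
    (lam : ℝ) (hlam : opNormL 𝒜 * enormR e / (Real.sqrt 2 - 1) < lam)
    (Xopt : Matrix (Fin n) (Fin n) ℂ) (hpsd : Xopt.PosSemidef)
    (hmin : ∀ X : Matrix (Fin n) (Fin n) ℂ, X.PosSemidef →
      phi 𝒜 b lam Xopt ≤ phi 𝒜 b lam X)
    (Λ : Matrix (Fin n) (Fin n) ℂ) (hΛ : Λ.PosSemidef)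
    (hstat : 𝒜adj (𝒜 Xopt - b) +
      lam • ((1 : Matrix (Fin n) (Fin n) ℂ) - (frob Xopt)⁻¹ • Xopt) = Λ)
    (hcomp : (Xoptᴴ * Λ).trace = 0) :
    Xopt.rank = 1 := by
  have hH : Xopt.IsHermitian := hpsd.1
  set F : ℝ := frob Xopt with hFdef
  set σ : Fin n → ℝ := hH.eigenvalues with hσdef
  set v : Fin n → (Fin n → ℂ) := fun i => ⇑(hH.eigenvectorBasis i) with hvdef
  have hσ0 : ∀ i, 0 ≤ σ i := hpsd.eigenvalues_nonneg
  have hsqrt2 : (1:ℝ) < Real.sqrt 2 := by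
    nlinarith [Real.sq_sqrt (by norm_num : (0:ℝ) ≤ 2), Real.sqrt_nonneg 2]
  have hlam0 : 0 < lam := by
    have h0 : 0 ≤ opNormL 𝒜 * enormR e / (Real.sqrt 2 - 1) := by
      have := opNormL_nonneg 𝒜
      have := enorm_nonneg' e
      have : (0:ℝ) < Real.sqrt 2 - 1 := by linarith
      positivity
    linarith
  -- phi at Xhat
  have hXhatpsd : (vecMulVec xhat (star xhat)).PosSemidef := by
    rw [Matrix.vecMulVec_eq (Fin 1), show Matrix.replicateRow (Fin 1) (star xhat) =
      (Matrix.replicateCol (Fin 1) xhat)ᴴ from (Matrix.conjTranspose_replicateCol _).symm]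
    exact Matrix.posSemidef_self_mul_conjTranspose _
  have htrXhat : (vecMulVec xhat (star xhat)).trace.re = ∑ i, ‖xhat i‖ ^ 2 := by
    simp only [Matrix.trace, Matrix.diag, vecMulVec_apply, Complex.re_sum]
    refine Finset.sum_congr rfl fun i _ => ?_
    rw [Pi.star_apply, Complex.star_def, Complex.mul_conj]
    norm_cast
    rw [Complex.normSq_eq_norm_sq]
  have hfrobXhat : frob (vecMulVec xhat (star xhat)) = ∑ i, ‖xhat i‖ ^ 2 := by
    have h1 : frob (vecMulVec xhat (star xhat)) ^ 2 = (∑ i, ‖xhat i‖ ^ 2) ^ 2 := by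
      rw [frob_sq, pow_two, Finset.sum_mul_sum]
      refine Finset.sum_congr rfl fun i _ => Finset.sum_congr rfl fun j _ => ?_
      rw [vecMulVec_apply, Pi.star_apply, Complex.star_def, norm_mul, mul_pow,
        show ‖(starRingEnd ℂ) (xhat i)‖ = ‖xhat i‖ from RCLike.norm_conj _]
      ring
    have h2 := frob_nonneg' (vecMulVec xhat (star xhat))
    have h3 : (0:ℝ) ≤ ∑ i, ‖xhat i‖ ^ 2 := Finset.sum_nonneg fun i _ => sq_nonneg _
    nlinarith
  have hφXhat : phi 𝒜 b lam (vecMulVec xhat (star xhat)) = 1/2 * enormR e ^ 2 := by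
    unfold phi
    rw [htrXhat, hfrobXhat, sub_self, mul_zero, add_zero, hb]
    rw [show 𝒜 (vecMulVec xhat (star xhat)) - (𝒜 (vecMulVec xhat (star xhat)) + e) = -e by abel]
    rw [enorm_neg']
  have hφopt : phi 𝒜 b lam Xopt ≤ 1/2 * enormR e ^ 2 := hφXhat ▸ hmin _ hXhatpsd
  have hF2 : F ^ 2 = ∑ i, σ i ^ 2 := by
    rw [hFdef, frob, Real.sq_sqrt, frob_sq_eigs hH]
    rw [frob_sq_eigs hH]
    exact Finset.sum_nonneg fun i _ => sq_nonneg _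
  have hTF : F ≤ Xopt.trace.re := by
    rw [trace_re_eq_sum_eigs hH]
    have h1 : ∑ i, σ i ^ 2 ≤ (∑ i, σ i) ^ 2 := by
      calc ∑ i, σ i ^ 2 ≤ ∑ i, σ i * (∑ j, σ j) := by
            refine Finset.sum_le_sum fun i _ => ?_
            rw [sq]
            exact mul_le_mul_of_nonneg_left
              (Finset.single_le_sum (fun j _ => hσ0 j) (Finset.mem_univ i)) (hσ0 i)
        _ = (∑ i, σ i) ^ 2 := by rw [← Finset.sum_mul, sq]
    have h2 : 0 ≤ ∑ i, σ i := Finset.sum_nonneg fun i _ => hσ0 i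
    nlinarith [frob_nonneg' Xopt, hF2]
  have hre : enormR (𝒜 Xopt - b) ≤ enormR e := by
    have h1 : phi 𝒜 b lam Xopt = 1/2 * enormR (𝒜 Xopt - b) ^ 2 +
        lam * (Xopt.trace.re - F) := rfl
    nlinarith [enorm_nonneg' (𝒜 Xopt - b), enorm_nonneg' e, hφopt]
  have hXne : Xopt ≠ 0 := by
    intro h0
    rw [h0] at hre
    rw [map_zero, zero_sub, enorm_neg'] at hre
    linarith
  have hFpos : 0 < F := frob_pos hXne
  -- the matrix M
  set M : Matrix (Fin n) (Fin n) ℂ := 𝒜adj (𝒜 Xopt - b) with hMdef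
  have hM : M = Λ - lam • ((1 : Matrix (Fin n) (Fin n) ℂ) - F⁻¹ • Xopt) :=
    eq_sub_of_add_eq hstat
  have hMherm : M.IsHermitian := by
    rw [hM]
    exact hΛ.1.sub (real_smul_herm lam (Matrix.isHermitian_one.sub (real_smul_herm F⁻¹ hH)))
  have hΛX : Λ * Xopt = 0 := by
    have h := psd_mul_eq_zero hpsd hΛ hcomp
    calc Λ * Xopt = (Xopt * Λ)ᴴ := by rw [conjTranspose_mul, hΛ.1, hpsd.1]
      _ = 0 := by rw [h, conjTranspose_zero]
  have hXv : ∀ i, Xopt *ᵥ v i = σ i • v i := fun i => hH.mulVec_eigenvectorBasis i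
  have hΛv : ∀ i, σ i ≠ 0 → Λ *ᵥ v i = 0 := by
    intro i hi
    have h1 : Λ *ᵥ (Xopt *ᵥ v i) = 0 := by rw [mulVec_mulVec, hΛX, zero_mulVec]
    rw [hXv i, mulVec_smul] at h1
    rcases smul_eq_zero.mp h1 with h | h
    · exact absurd h hi
    · exact h
  set μ : Fin n → ℝ := fun i => lam * (σ i / F - 1) with hμdef
  have hMv : ∀ i, σ i ≠ 0 → M *ᵥ v i = μ i • v i := by
    intro i hi
    rw [hM, sub_mulVec, hΛv i hi, zero_sub, smul_mulVec, sub_mulVec, one_mulVec,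
      smul_mulVec, hXv i]
    funext j
    simp only [Pi.neg_apply, Pi.smul_apply, Pi.sub_apply, Complex.real_smul, hμdef]
    push_cast
    field_simp
    ring
  have hv1 : ∀ i, ∑ j, ‖v i j‖ ^ 2 = 1 := by
    intro i
    have h1 := hH.eigenvectorBasis.orthonormal.1 i
    rw [EuclideanSpace.norm_eq] at h1
    have h2 : (0:ℝ) ≤ ∑ j, ‖hH.eigenvectorBasis i j‖ ^ 2 :=
      Finset.sum_nonneg fun j _ => sq_nonneg _
    have h3 := congrArg (· ^ 2) h1
    simp only at h3
    rw [Real.sq_sqrt h2, one_pow] at h3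
    exact h3
  set S : Finset (Fin n) := Finset.univ.filter (fun i => σ i ≠ 0) with hSdef
  have hsum_le : ∑ i ∈ S, μ i ^ 2 ≤ (Mᴴ * M).trace.re := by
    rw [trace_sq_unitary M _ (hH.eigenvectorUnitary).2]
    have hcol : ∀ i j, (M * (hH.eigenvectorUnitary : Matrix (Fin n) (Fin n) ℂ)) j i
        = (M *ᵥ v i) j := by
      intro i j
      simp [Matrix.mul_apply, Matrix.mulVec, dotProduct, hvdef]
    calc ∑ i ∈ S, μ i ^ 2 = ∑ i ∈ S, ∑ j, ‖(M *ᵥ v i) j‖ ^ 2 := by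
          refine Finset.sum_congr rfl fun i hi => ?_
          rw [hMv i (Finset.mem_filter.mp hi).2]
          have : ∀ j, ‖(μ i • v i) j‖ ^ 2 = μ i ^ 2 * ‖v i j‖ ^ 2 := fun j => by
            rw [Pi.smul_apply, norm_smul, Real.norm_eq_abs, mul_pow, sq_abs]
          rw [Finset.sum_congr rfl fun j _ => this j, ← Finset.mul_sum, hv1 i, mul_one]
      _ ≤ ∑ i, ∑ j, ‖(M *ᵥ v i) j‖ ^ 2 := Finset.sum_le_sum_of_subset_of_nonneg
            (Finset.subset_univ S) (fun i _ _ => Finset.sum_nonneg fun j _ => sq_nonneg _)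
      _ = _ := Finset.sum_congr rfl fun i _ => Finset.sum_congr rfl fun j _ => by rw [hcol]
  have htrace_nonneg : 0 ≤ (Mᴴ * M).trace.re := by
    rw [trace_conj_re]
    exact Finset.sum_nonneg fun i _ => Finset.sum_nonneg fun j _ => sq_nonneg _
  have hfM : (Mᴴ * M).trace.re = frob M ^ 2 := by
    rw [frob, Real.sq_sqrt htrace_nonneg]
  have hMbound : frob M ≤ opNormL 𝒜 * enormR e := by
    have hinner := hadj M hMherm (𝒜 Xopt - b)
    have hCS : ∑ i, 𝒜 M i * (𝒜 Xopt - b) i ≤ enormR (𝒜 M) * enormR (𝒜 Xopt - b) := by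
      have h1 := Finset.sum_mul_sq_le_sq_mul_sq Finset.univ (𝒜 M) (𝒜 Xopt - b)
      nlinarith [enorm_sq' (𝒜 M), enorm_sq' (𝒜 Xopt - b), enorm_nonneg' (𝒜 M),
        enorm_nonneg' (𝒜 Xopt - b), mul_nonneg (enorm_nonneg' (𝒜 M))
          (enorm_nonneg' (𝒜 Xopt - b))]
    have h2 : frob M ^ 2 ≤ (opNormL 𝒜 * frob M) * enormR e := by
      calc frob M ^ 2 = (Mᴴ * M).trace.re := hfM.symm
        _ = ∑ i, 𝒜 M i * (𝒜 Xopt - b) i := by rw [hinner, hMdef]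
        _ ≤ enormR (𝒜 M) * enormR (𝒜 Xopt - b) := hCS
        _ ≤ (opNormL 𝒜 * frob M) * enormR (𝒜 Xopt - b) :=
            mul_le_mul_of_nonneg_right (enorm_le_opNormL 𝒜 hMherm) (enorm_nonneg' _)
        _ ≤ (opNormL 𝒜 * frob M) * enormR e := by
            refine mul_le_mul_of_nonneg_left hre ?_
            exact mul_nonneg (opNormL_nonneg 𝒜) (frob_nonneg' M)
    rcases eq_or_lt_of_le (frob_nonneg' M) with h | h
    · rw [← h]
      exact mul_nonneg (opNormL_nonneg 𝒜) (enorm_nonneg' e)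
    · nlinarith [h2]
  have hfinal : ∑ i ∈ S, μ i ^ 2 < (lam * (Real.sqrt 2 - 1)) ^ 2 := by
    have h21 : (0:ℝ) < Real.sqrt 2 - 1 := by linarith
    have h1 : opNormL 𝒜 * enormR e < lam * (Real.sqrt 2 - 1) := by
      rw [div_lt_iff₀ h21] at hlam
      linarith
    have h0 : 0 ≤ opNormL 𝒜 * enormR e := mul_nonneg (opNormL_nonneg 𝒜) (enorm_nonneg' e)
    calc ∑ i ∈ S, μ i ^ 2 ≤ (Mᴴ * M).trace.re := hsum_le
      _ = frob M ^ 2 := hfM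
      _ ≤ (opNormL 𝒜 * enormR e) ^ 2 := pow_le_pow_left₀ (frob_nonneg' M) hMbound 2
      _ < (lam * (Real.sqrt 2 - 1)) ^ 2 := by
          exact pow_lt_pow_left₀ h1 h0 (by norm_num)
  -- real analysis part
  have hsum_sq : ∑ i ∈ S, σ i ^ 2 = ∑ i, σ i ^ 2 := by
    refine Finset.sum_subset (Finset.subset_univ S) fun i _ hi => ?_
    simp only [hSdef, Finset.mem_filter, Finset.mem_univ, true_and, not_not] at hi
    rw [hi]; ring
  have hk_sum : ∑ i ∈ S, (σ i / F) ^ 2 = 1 := by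
    have : ∑ i ∈ S, (σ i / F) ^ 2 = (∑ i ∈ S, σ i ^ 2) / F ^ 2 := by
      rw [Finset.sum_div]
      exact Finset.sum_congr rfl fun i _ => by field_simp
    rw [this, hsum_sq, ← hF2]
    field_simp
  have hSne : S.Nonempty := by
    rw [Finset.nonempty_iff_ne_empty]
    intro h0
    rw [h0, Finset.sum_empty] at hk_sum
    norm_num at hk_sum
  set k : ℕ := S.card with hkdef
  have hk1 : (1:ℝ) ≤ (k:ℝ) := by
    have := Finset.card_pos.mpr hSne
    exact_mod_cast this
  have hsum_t_le : ∑ i ∈ S, σ i / F ≤ Real.sqrt k := by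
    have hCS2 := Finset.sum_mul_sq_le_sq_mul_sq S (fun _ => (1:ℝ)) (fun i => σ i / F)
    simp only [one_mul, one_pow, Finset.sum_const, nsmul_eq_mul, mul_one] at hCS2
    rw [hk_sum, mul_one] at hCS2
    have h0 : 0 ≤ ∑ i ∈ S, σ i / F :=
      Finset.sum_nonneg fun i _ => div_nonneg (hσ0 i) hFpos.le
    nlinarith [Real.sq_sqrt (Nat.cast_nonneg k), Real.sqrt_nonneg (k:ℝ)]
  have hexpand : ∑ i ∈ S, (σ i / F - 1) ^ 2 = 1 - 2 * (∑ i ∈ S, σ i / F) + k := by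
    have h1 : ∀ i ∈ S, (σ i / F - 1) ^ 2 = (σ i / F) ^ 2 - 2 * (σ i / F) + 1 :=
      fun i _ => by ring
    rw [Finset.sum_congr rfl h1, Finset.sum_add_distrib, Finset.sum_sub_distrib,
      hk_sum, ← Finset.mul_sum, Finset.sum_const, nsmul_eq_mul, mul_one]
  have hμsum : ∑ i ∈ S, μ i ^ 2 = lam ^ 2 * ∑ i ∈ S, (σ i / F - 1) ^ 2 := by
    rw [Finset.mul_sum]
    exact Finset.sum_congr rfl fun i _ => by rw [hμdef]; ring
  have hineq : ∑ i ∈ S, (σ i / F - 1) ^ 2 < (Real.sqrt 2 - 1) ^ 2 := by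
    rw [hμsum] at hfinal
    have h2 : (lam * (Real.sqrt 2 - 1)) ^ 2 = lam ^ 2 * (Real.sqrt 2 - 1) ^ 2 := by ring
    rw [h2] at hfinal
    exact lt_of_mul_lt_mul_left hfinal (sq_nonneg lam)
  have hklt : (k:ℝ) < 2 := by
    have hsk := Real.sq_sqrt (Nat.cast_nonneg k)
    have hsk1 : (1:ℝ) ≤ Real.sqrt k := by
      nlinarith [Real.sqrt_nonneg (k:ℝ)]
    have h1 : (Real.sqrt k - 1) ^ 2 ≤ ∑ i ∈ S, (σ i / F - 1) ^ 2 := by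
      rw [hexpand]
      nlinarith
    have h2 : Real.sqrt k - 1 < Real.sqrt 2 - 1 := by
      nlinarith [hineq]
    nlinarith [Real.sq_sqrt (show (0:ℝ) ≤ (2:ℝ) by norm_num)]
  have hkeq : k = 1 := by
    have h2 : k < 2 := by exact_mod_cast hklt
    have h1 : 1 ≤ k := Finset.card_pos.mpr hSne
    omega
  rw [hH.rank_eq_card_non_zero_eigs, Fintype.card_subtype]
  exact hkeq
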